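/- Let $z_1, \ldots, z_n \in \mathbb{R}^d$ with $\|z_i\| \leq 1$, suppose there is a unit vector $x^*$ with $z_i^T x^* \geq \tau > 0$ for all $i$, and let $c_1, \ldots, c_n$ be real numbers all of the same sign (i.e., $c_i c_j \geq 0$ for all $i,j$). Then $\frac{1}{n}\sum_{i=1}^n c_i^2 \|z_i\|^2 \leq \frac{n}{\tau^2}\left\|\frac{1}{n}\sum_{i=1}^n c_i z_i\right\|^2$. -/

import Mathlib

open scoped RealInnerProductSpace

noncomputable section

/-- Key inequality underlying the strong growth condition bound for monotone
losses on linearly separable data. -/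
theorem separable_sign_inequality
    (d n : ℕ) (hn : 0 < n)
    (z : Fin n → EuclideanSpace ℝ (Fin d))
    (hz : ∀ i, ‖z i‖ ≤ 1)
    (τ : ℝ) (hτ : 0 < τ)
    (xstar : EuclideanSpace ℝ (Fin d)) (hxs : ‖xstar‖ = 1)
    (hmargin : ∀ i, τ ≤ ⟪z i, xstar⟫)
    (c : Fin n → ℝ) (hc : ∀ i j, 0 ≤ c i * c j) :
    (n : ℝ)⁻¹ * ∑ i, (c i) ^ 2 * ‖z i‖ ^ 2
      ≤ ((n : ℝ) / τ ^ 2) * ‖(n : ℝ)⁻¹ • ∑ i, c i • z i‖ ^ 2 := by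
  set S := ∑ i, c i • z i with hS
  have hnpos : (0:ℝ) < n := by exact_mod_cast hn
  -- inner product of S with xstar
  have hinner : ⟪S, xstar⟫ = ∑ i, c i * ⟪z i, xstar⟫ := by
    rw [hS, sum_inner]
    exact Finset.sum_congr rfl fun i _ => real_inner_smul_left _ _ _
  -- key lower bound on norm: ‖S‖ ≥ τ * ∑ |c i|
  have hkey : τ * ∑ i, |c i| ≤ ‖S‖ := by
    have habs : |⟪S, xstar⟫| ≤ ‖S‖ := by
      calc |⟪S, xstar⟫| ≤ ‖S‖ * ‖xstar‖ := abs_real_inner_le_norm _ _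
        _ = ‖S‖ := by rw [hxs, mul_one]
    refine le_trans ?_ habs
    rcases (em (∀ i, 0 ≤ c i)) with hpos | hneg
    · have h1 : τ * ∑ i, |c i| ≤ ⟪S, xstar⟫ := by
        rw [hinner, Finset.mul_sum]
        refine Finset.sum_le_sum fun i _ => ?_
        rw [abs_of_nonneg (hpos i), mul_comm]
        exact mul_le_mul_of_nonneg_left (hmargin i) (hpos i)
      exact h1.trans (le_abs_self _)
    · push_neg at hneg
      obtain ⟨k, hk⟩ := hneg
      have hkneg : c k < 0 := hk
      have hall : ∀ i, c i ≤ 0 := fun i => by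
        by_contra h
        push_neg at h
        have := hc k i
        nlinarith
      have h1 : ⟪S, xstar⟫ ≤ -(τ * ∑ i, |c i|) := by
        rw [hinner]
        have : -(τ * ∑ i, |c i|) = ∑ i, τ * c i := by
          rw [Finset.mul_sum, ← Finset.sum_neg_distrib]
          refine Finset.sum_congr rfl fun i _ => ?_
          rw [abs_of_nonpos (hall i)]; ring
        rw [this]
        refine Finset.sum_le_sum fun i _ => ?_
        rw [mul_comm τ (c i)]
        exact mul_le_mul_of_nonpos_left (hmargin i) (hall i)
      exact le_trans (by linarith [neg_le_abs ⟪S, xstar⟫]) (le_refl |⟪S, xstar⟫|)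
  have hsum_nonneg : 0 ≤ ∑ i, |c i| := Finset.sum_nonneg fun i _ => abs_nonneg _
  -- square it
  have hsq : τ ^ 2 * ∑ i, (c i) ^ 2 ≤ ‖S‖ ^ 2 := by
    have h1 : ∑ i, (c i) ^ 2 ≤ (∑ i, |c i|) ^ 2 := by
      have := Finset.sum_sq_le_sq_sum_of_nonneg (s := Finset.univ)
        (f := fun i => |c i|) (fun i _ => abs_nonneg _)
      simpa [sq_abs] using this
    have h2 : (τ * ∑ i, |c i|) ^ 2 ≤ ‖S‖ ^ 2 := by
      apply sq_le_sq' <;> nlinarith [norm_nonneg S]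
    nlinarith
  -- LHS bound
  have hLHS : ∑ i, (c i) ^ 2 * ‖z i‖ ^ 2 ≤ ∑ i, (c i) ^ 2 := by
    refine Finset.sum_le_sum fun i _ => ?_
    have h1 : ‖z i‖ ^ 2 ≤ 1 := by nlinarith [hz i, norm_nonneg (z i)]
    exact mul_le_of_le_one_right (sq_nonneg _) h1
  have hRHS : ((n : ℝ) / τ ^ 2) * ‖(n : ℝ)⁻¹ • S‖ ^ 2
      = ‖S‖ ^ 2 / ((n:ℝ) * τ ^ 2) := by
    rw [norm_smul]
    have : ‖(n:ℝ)⁻¹‖ = (n:ℝ)⁻¹ := by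
      rw [Real.norm_eq_abs, abs_of_nonneg (by positivity)]
    rw [this]
    field_simp
  rw [hRHS]
  have hτ2 : (0:ℝ) < τ ^ 2 := by positivity
  calc (n : ℝ)⁻¹ * ∑ i, (c i) ^ 2 * ‖z i‖ ^ 2
      ≤ (n : ℝ)⁻¹ * ∑ i, (c i) ^ 2 := by
        exact mul_le_mul_of_nonneg_left hLHS (by positivity)
    _ ≤ ((n:ℝ) * τ ^ 2)⁻¹ * ‖S‖ ^ 2 := by
        rw [mul_inv, mul_assoc]
        refine mul_le_mul_of_nonneg_left ?_ (by positivity)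
        calc ∑ i, (c i) ^ 2 ≤ ‖S‖^2 / τ^2 := by
              rw [le_div_iff₀ hτ2, mul_comm]; exact hsq
          _ = (τ^2)⁻¹ * ‖S‖^2 := by ring
    _ = ‖S‖ ^ 2 / ((n:ℝ) * τ ^ 2) := by ring
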